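/- For an infinite set I, the matrix algebra M_I(ℂ) is pseudo-amenable but not strong pseudo-amenable. -/

import Mathlib

noncomputable section

open ContinuousLinearMap NormedSpace

/-- A directed index system for nets. -/
structure DirSys : Type 1 where
  ι : Type
  le : ι → ι → Prop
  refl : ∀ i, le i i
  trans : ∀ {i j k}, le i j → le j k → le i k
  nonempty : Nonempty ι
  directed : ∀ i j, ∃ k, le i k ∧ le j k

/-- Convergence of a net indexed by a directed system, in a (pseudo)metric space. -/
def DirSys.Tendsto (D : DirSys) {X : Type*} [PseudoMetricSpace X] (m : D.ι → X) (x : X) : Prop :=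
  ∀ ε : ℝ, 0 < ε → ∃ i, ∀ j, D.le i j → dist (m j) x < ε

variable (A : Type*) [NonUnitalNormedRing A] [NormedSpace ℂ A]
  [IsScalarTower ℂ A A] [SMulCommClass ℂ A A]

/-- The continuous bilinear forms on `A`, i.e. the dual space of the projective tensor
product `A ⊗̂ A`. -/
abbrev BilForms := A →L[ℂ] StrongDual ℂ A

/-- The bidual `(A ⊗̂ A)**` of the projective tensor product, realized concretely as the
dual space of the space of continuous bilinear forms on `A` (the latter being canonically,
isometrically, the dual of `A ⊗̂ A`). -/
abbrev TensorBidual := StrongDual ℂ (BilForms A)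

instance : NormedAddCommGroup (TensorBidual A) :=
  ContinuousLinearMap.toNormedAddCommGroup (𝕜 := ℂ) (𝕜₂ := ℂ) (σ₁₂ := RingHom.id ℂ)
    (E := BilForms A) (F := ℂ)

instance : NormedSpace ℂ (TensorBidual A) :=
  ContinuousLinearMap.toNormedSpace (𝕜 := ℂ) (𝕜₂ := ℂ) (σ₁₂ := RingHom.id ℂ)
    (E := BilForms A) (F := ℂ)

/-- The bidual `A**` of `A`. -/
abbrev Bidual := StrongDual ℂ (StrongDual ℂ A)

variable {A}

/-- The elementary tensor `x ⊗ y`, viewed inside `(A ⊗̂ A)**` via the canonical isometric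
embedding of `A ⊗̂ A` into its bidual. -/
def elemT (x y : A) : TensorBidual A :=
  (ContinuousLinearMap.apply ℂ ℂ y).comp (ContinuousLinearMap.apply ℂ (StrongDual ℂ A) x)

variable (A)

/-- The canonical isometric copy of `A ⊗̂ A` inside its bidual: the closure of the linear
span of the elementary tensors. -/
def ptp : Submodule ℂ (TensorBidual A) :=
  (Submodule.span ℂ {m : TensorBidual A | ∃ x y : A, m = elemT x y}).topologicalClosure

/-- The map `f ↦ f·a` on bilinear forms, `(f·a)(x,y) = f(ax, y)`; predual of the left
module action of `A` on `(A ⊗̂ A)**`. -/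
def leftBil (a : A) : BilForms A →L[ℂ] BilForms A :=
  (compL ℂ A A (StrongDual ℂ A)).flip (ContinuousLinearMap.mul ℂ A a)

/-- The map `f ↦ a·f` on bilinear forms, `(a·f)(x,y) = f(x, ya)`; predual of the right
module action of `A` on `(A ⊗̂ A)**`. -/
def rightBil (a : A) : BilForms A →L[ℂ] BilForms A :=
  compL ℂ A (StrongDual ℂ A) (StrongDual ℂ A)
    ((compL ℂ A A ℂ).flip ((ContinuousLinearMap.mul ℂ A).flip a))

variable {A}

/-- The left module action `a · m` of `A` on `(A ⊗̂ A)**`, extending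
`a · (x ⊗ y) = (a x) ⊗ y`. -/
def tsmulL (a : A) (m : TensorBidual A) : TensorBidual A := m.comp (leftBil A a)

/-- The right module action `m · a` of `A` on `(A ⊗̂ A)**`, extending
`(x ⊗ y) · a = x ⊗ (y a)`. -/
def tsmulR (a : A) (m : TensorBidual A) : TensorBidual A := m.comp (rightBil A a)

variable (A)

/-- The adjoint `π_A* : A* → (A ⊗̂ A)*` of the product morphism `π_A`, namely
`(π_A* f)(x, y) = f (x y)`. -/
def piStar : StrongDual ℂ A →L[ℂ] BilForms A :=
  ((compL ℂ A (A →L[ℂ] A) (StrongDual ℂ A)).flip (ContinuousLinearMap.mul ℂ A)).comp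
    (compL ℂ A A ℂ)

variable {A}

/-- The second adjoint `π_A** : (A ⊗̂ A)** → A**` of the product morphism. -/
def piSS (m : TensorBidual A) : Bidual A := m.comp (piStar A)

variable (A)

/-- The map `f ↦ f·a` on `A*`, `(f·a)(x) = f(ax)`. -/
def dualROp (a : A) : StrongDual ℂ A →L[ℂ] StrongDual ℂ A :=
  (compL ℂ A A ℂ).flip (ContinuousLinearMap.mul ℂ A a)

/-- The map `f ↦ a·f` on `A*`, `(a·f)(x) = f(xa)`. -/
def dualLOp (a : A) : StrongDual ℂ A →L[ℂ] StrongDual ℂ A :=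
  (compL ℂ A A ℂ).flip ((ContinuousLinearMap.mul ℂ A).flip a)

variable {A}

/-- The product `a · Φ` of `a ∈ A` and `Φ ∈ A**`: `(a·Φ)(f) = Φ(f·a)`. -/
def bsmulL (a : A) (Φ : Bidual A) : Bidual A := Φ.comp (dualROp A a)

/-- The product `Φ · a` of `Φ ∈ A**` and `a ∈ A`: `(Φ·a)(f) = Φ(a·f)`. -/
def bsmulR (a : A) (Φ : Bidual A) : Bidual A := Φ.comp (dualLOp A a)

/-- The canonical isometric embedding of `A` into its bidual. -/
def inclB (a : A) : Bidual A := NormedSpace.inclusionInDoubleDual ℂ A a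

variable (A)

/-- A Banach algebra `A` is *strong pseudo-amenable* if there is a (not necessarily bounded)
net `(m_α)` in `(A ⊗̂ A)**` such that `a·m_α − m_α·a → 0` and
`a·π_A**(m_α) = π_A**(m_α)·a → a` for every `a ∈ A`. -/
def StrongPseudoAmenable : Prop :=
  ∃ (D : DirSys) (m : D.ι → TensorBidual A),
    (∀ a : A, D.Tendsto (fun α => tsmulL a (m α) - tsmulR a (m α)) 0) ∧
    (∀ (a : A) (α : D.ι), bsmulL a (piSS (m α)) = bsmulR a (piSS (m α))) ∧
    (∀ a : A, D.Tendsto (fun α => bsmulR a (piSS (m α))) (inclB a))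

/-- A Banach algebra `A` is *pseudo-amenable* if there is a (not necessarily bounded)
net `(m_α)` in `A ⊗̂ A` such that `a·m_α − m_α·a → 0` and `π_A(m_α)a → a` for every `a ∈ A`. -/
def PseudoAmenable : Prop :=
  ∃ (D : DirSys) (m : D.ι → TensorBidual A),
    (∀ α, m α ∈ ptp A) ∧
    (∀ a : A, D.Tendsto (fun α => tsmulL a (m α) - tsmulR a (m α)) 0) ∧
    (∀ a : A, D.Tendsto (fun α => bsmulR a (piSS (m α))) (inclB a))

/-- A Banach algebra `A` is *pseudo-contractible* if there is a net `(m_α)` in `A ⊗̂ A`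
such that `a·m_α = m_α·a` and `π_A(m_α)a → a` for every `a ∈ A`. -/
def PseudoContractible : Prop :=
  ∃ (D : DirSys) (m : D.ι → TensorBidual A),
    (∀ α, m α ∈ ptp A) ∧
    (∀ (a : A) (α : D.ι), tsmulL a (m α) = tsmulR a (m α)) ∧
    (∀ a : A, D.Tendsto (fun α => bsmulR a (piSS (m α))) (inclB a))

/-- A Banach algebra `A` is *amenable* if it has a bounded approximate diagonal: a bounded
net `(m_α)` in `A ⊗̂ A` such that `a·m_α − m_α·a → 0` and `π_A(m_α)a → a` for every `a ∈ A`. -/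
def AmenableBanachAlgebra : Prop :=
  ∃ (D : DirSys) (m : D.ι → TensorBidual A) (C : ℝ),
    (∀ α, m α ∈ ptp A) ∧
    (∀ α, ‖m α‖ ≤ C) ∧
    (∀ a : A, D.Tendsto (fun α => tsmulL a (m α) - tsmulR a (m α)) 0) ∧
    (∀ a : A, D.Tendsto (fun α => bsmulR a (piSS (m α))) (inclB a))

end

/-- `(M, e)` is a realization of the Banach algebra `M_I(ℂ)` of `I × I` complex matrices
with finite `ℓ¹`-norm: the `e i j` are the standard matrix units `ε_{i,j}`, finite linear
combinations of them carry the `ℓ¹`-norm, and they have dense linear span. -/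
def IsMatrixUnitsL1 (I : Type) [DecidableEq I] (M : Type)
    [NonUnitalNormedRing M] [NormedSpace ℂ M] (e : I → I → M) : Prop :=
  (∀ i j k l : I, e i j * e k l = if j = k then e i l else 0) ∧
  (∀ (s : Finset (I × I)) (c : I × I → ℂ),
      ‖∑ p ∈ s, c p • e p.1 p.2‖ = ∑ p ∈ s, ‖c p‖) ∧
  ((Submodule.span ℂ (Set.range fun p : I × I => e p.1 p.2)).topologicalClosure = ⊤)



set_option linter.unusedSectionVars false

section AbstractAux

variable {A : Type*} [NonUnitalNormedRing A] [NormedSpace ℂ A]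
  [IsScalarTower ℂ A A] [SMulCommClass ℂ A A]

lemma elemT_apply (x y : A) (F : BilForms A) : elemT x y F = F x y := rfl

lemma inclB_apply (b : A) (f : StrongDual ℂ A) : inclB b f = f b := rfl

lemma tsmulL_elemT (a x y : A) : tsmulL a (elemT x y) = elemT (a * x) y := rfl
lemma tsmulR_elemT (a x y : A) : tsmulR a (elemT x y) = elemT x (y * a) := rfl
lemma piSS_elemT (x y : A) : piSS (elemT x y) = inclB (x * y) := rfl
lemma bsmulR_inclB (a b : A) : bsmulR a (inclB b) = inclB (b * a) := rfl

lemma dualROp_apply (a : A) (f : StrongDual ℂ A) (x : A) :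
    dualROp A a f x = f (a * x) := rfl
lemma dualLOp_apply (a : A) (f : StrongDual ℂ A) (x : A) :
    dualLOp A a f x = f (x * a) := rfl
lemma bsmulL_apply (a : A) (Φ : Bidual A) (f : StrongDual ℂ A) :
    bsmulL a Φ f = Φ (dualROp A a f) := rfl
lemma bsmulR_apply (a : A) (Φ : Bidual A) (f : StrongDual ℂ A) :
    bsmulR a Φ f = Φ (dualLOp A a f) := rfl

lemma norm_elemT_le (x y : A) : ‖elemT x y‖ ≤ ‖x‖ * ‖y‖ := by
  refine ContinuousLinearMap.opNorm_le_bound _ (mul_nonneg (norm_nonneg _) (norm_nonneg _)) ?_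
  intro F
  calc ‖elemT x y F‖ = ‖F x y‖ := rfl
    _ ≤ ‖F x‖ * ‖y‖ := (F x).le_opNorm y
    _ ≤ (‖F‖ * ‖x‖) * ‖y‖ := by
        exact mul_le_mul_of_nonneg_right (F.le_opNorm x) (norm_nonneg _)
    _ = ‖x‖ * ‖y‖ * ‖F‖ := by ring

lemma norm_inclB_le (b : A) : ‖inclB b‖ ≤ ‖b‖ := by
  refine ContinuousLinearMap.opNorm_le_bound _ (norm_nonneg _) ?_
  intro f
  calc ‖inclB b f‖ = ‖f b‖ := rfl
    _ ≤ ‖f‖ * ‖b‖ := f.le_opNorm b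
    _ = ‖b‖ * ‖f‖ := mul_comm _ _

lemma inclB_sub (x y : A) : inclB (x - y) = inclB x - inclB y := by
  unfold inclB; rw [map_sub]

lemma inclB_sum {ι : Type*} (s : Finset ι) (f : ι → A) :
    inclB (∑ i ∈ s, f i) = ∑ i ∈ s, inclB (f i) := by
  unfold inclB; rw [map_sum]

lemma tsmulL_sum {ι : Type*} (a : A) (s : Finset ι) (f : ι → TensorBidual A) :
    tsmulL a (∑ i ∈ s, f i) = ∑ i ∈ s, tsmulL a (f i) := by
  ext F
  simp [tsmulL, ContinuousLinearMap.sum_apply]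

lemma tsmulR_sum {ι : Type*} (a : A) (s : Finset ι) (f : ι → TensorBidual A) :
    tsmulR a (∑ i ∈ s, f i) = ∑ i ∈ s, tsmulR a (f i) := by
  ext F
  simp [tsmulR, ContinuousLinearMap.sum_apply]

lemma piSS_sum {ι : Type*} (s : Finset ι) (f : ι → TensorBidual A) :
    piSS (∑ i ∈ s, f i) = ∑ i ∈ s, piSS (f i) := by
  ext F
  simp [piSS, ContinuousLinearMap.sum_apply]

lemma bsmulR_sum {ι : Type*} (a : A) (s : Finset ι) (f : ι → Bidual A) :
    bsmulR a (∑ i ∈ s, f i) = ∑ i ∈ s, bsmulR a (f i) := by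
  ext F
  simp [bsmulR, ContinuousLinearMap.sum_apply]

noncomputable instance : NormedAddCommGroup (BilForms A) :=
  ContinuousLinearMap.toNormedAddCommGroup (𝕜 := ℂ) (𝕜₂ := ℂ) (σ₁₂ := RingHom.id ℂ)
    (E := A) (F := StrongDual ℂ A)

noncomputable instance : NormedSpace ℂ (BilForms A) :=
  ContinuousLinearMap.toNormedSpace (𝕜 := ℂ) (𝕜₂ := ℂ) (σ₁₂ := RingHom.id ℂ)
    (E := A) (F := StrongDual ℂ A)

lemma leftBil_add (x y : A) : leftBil A (x + y) = leftBil A x + leftBil A y := by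
  ext F u v
  show F ((x + y) * u) v = F (x * u) v + F (y * u) v
  rw [add_mul, map_add, ContinuousLinearMap.add_apply]

lemma rightBil_add (x y : A) : rightBil A (x + y) = rightBil A x + rightBil A y := by
  ext F u v
  show F u (v * (x + y)) = F u (v * x) + F u (v * y)
  rw [mul_add, map_add]

lemma tsmulL_add_left (x y : A) (m : TensorBidual A) :
    tsmulL (x + y) m = tsmulL x m + tsmulL y m := by
  ext F
  show m (leftBil A (x + y) F) = m (leftBil A x F) + m (leftBil A y F)
  rw [leftBil_add, ContinuousLinearMap.add_apply, map_add]

lemma tsmulR_add_left (x y : A) (m : TensorBidual A) :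
    tsmulR (x + y) m = tsmulR x m + tsmulR y m := by
  ext F
  show m (rightBil A (x + y) F) = m (rightBil A x F) + m (rightBil A y F)
  rw [rightBil_add, ContinuousLinearMap.add_apply, map_add]

lemma elemT_sum_left {ι : Type*} (s : Finset ι) (f : ι → A) (y : A) :
    elemT (∑ i ∈ s, f i) y = ∑ i ∈ s, elemT (f i) y := by
  ext F
  show F (∑ i ∈ s, f i) y = _
  rw [map_sum]
  simp [ContinuousLinearMap.sum_apply, elemT_apply]

lemma elemT_smul_left (c : ℂ) (x y : A) : elemT (c • x) y = c • elemT x y := by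
  ext F
  show F (c • x) y = c • (F x y)
  rw [map_smul, ContinuousLinearMap.smul_apply]

lemma elemT_zero_left (y : A) : elemT (0 : A) y = 0 := by
  ext F
  show F 0 y = 0
  rw [map_zero, ContinuousLinearMap.zero_apply]

lemma elemT_sum_right {ι : Type*} (s : Finset ι) (x : A) (f : ι → A) :
    elemT x (∑ i ∈ s, f i) = ∑ i ∈ s, elemT x (f i) := by
  ext F
  show F x (∑ i ∈ s, f i) = _
  rw [map_sum]
  simp [ContinuousLinearMap.sum_apply, elemT_apply]

lemma elemT_smul_right (c : ℂ) (x y : A) : elemT x (c • y) = c • elemT x y := by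
  ext F
  show F x (c • y) = c • (F x y)
  rw [map_smul]

lemma elemT_zero_right (x : A) : elemT x (0 : A) = 0 := by
  ext F
  show F x 0 = 0
  rw [map_zero]

end AbstractAux

section MatrixAux

set_option linter.unusedSectionVars false

variable {I : Type} [DecidableEq I] {M : Type}
  [NonUnitalNormedRing M] [NormedSpace ℂ M] [IsScalarTower ℂ M M]
  [SMulCommClass ℂ M M] [CompleteSpace M] {e : I → I → M}

namespace MXA

variable (hM : IsMatrixUnitsL1 I M e)
include hM

lemma norm_e (i j : I) : ‖e i j‖ = 1 := by
  have h := hM.2.1 {(i, j)} (fun _ => 1)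
  simpa using h

lemma dense_span (a : M) :
    a ∈ closure ((Submodule.span ℂ (Set.range fun p : I × I => e p.1 p.2) : Submodule ℂ M) :
      Set M) := by
  have h : a ∈ (Submodule.span ℂ (Set.range fun p : I × I => e p.1 p.2)).topologicalClosure := by
    rw [hM.2.2]; trivial
  exact h

lemma exists_approx (a : M) {ε : ℝ} (hε : 0 < ε) :
    ∃ c : (I × I) →₀ ℂ, ‖a - ∑ p ∈ c.support, c p • e p.1 p.2‖ < ε := by
  obtain ⟨b, hb, hdist⟩ := Metric.mem_closure_iff.mp (dense_span hM a) ε hε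
  obtain ⟨c, rfl⟩ := Finsupp.mem_span_range_iff_exists_finsupp.mp hb
  refine ⟨c, ?_⟩
  rw [dist_eq_norm] at hdist
  simpa [Finsupp.sum] using hdist

lemma ext_dense {f g : StrongDual ℂ M} (h : ∀ i j, f (e i j) = g (e i j)) : f = g := by
  ext a
  have hs : (Submodule.span ℂ (Set.range fun p : I × I => e p.1 p.2) : Set M) ⊆
      {x | f x = g x} := by
    intro x hx
    induction hx using Submodule.span_induction with
    | mem x hx => obtain ⟨p, rfl⟩ := hx; exact h p.1 p.2
    | zero => simp
    | add x y _ _ hx hy =>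
        show f (x + y) = g (x + y)
        rw [map_add, map_add, show f x = g x from hx, show f y = g y from hy]
    | smul c x _ hx =>
        show f (c • x) = g (c • x)
        rw [map_smul, map_smul, show f x = g x from hx]
  have hcl : closure ((Submodule.span ℂ (Set.range fun p : I × I => e p.1 p.2)) : Set M) ⊆
      {x | f x = g x} :=
    closure_minimal hs (isClosed_eq f.continuous g.continuous)
  exact hcl (dense_span hM a)

lemma linind : LinearIndependent ℂ (fun p : I × I => e p.1 p.2) := by
  rw [linearIndependent_iff']
  intro s g hg p hp
  have h2 := hM.2.1 s g
  rw [hg, norm_zero] at h2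
  have h3 := (Finset.sum_eq_zero_iff_of_nonneg
    (fun q _ => (norm_nonneg (g q)))).mp h2.symm p hp
  simpa using h3

lemma exists_dual (g : I × I → ℂ) (hg : ∀ p, ‖g p‖ ≤ 1) :
    ∃ f : StrongDual ℂ M, ‖f‖ ≤ 1 ∧ ∀ i j, f (e i j) = g (i, j) := by
  classical
  set v : I × I → M := fun p => e p.1 p.2 with hv
  set S := Submodule.span ℂ (Set.range v) with hS
  let b : Module.Basis (I × I) ℂ S := Module.Basis.span (linind hM)
  let f₀ : S →ₗ[ℂ] ℂ := b.constr ℂ g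
  have hb : ∀ x : S, ‖f₀ x‖ ≤ 1 * ‖x‖ := by
    intro x
    have hrep : (x : M) = ∑ p ∈ (b.repr x).support, (b.repr x) p • v p := by
      conv_lhs => rw [← b.linearCombination_repr x]
      rw [Finsupp.linearCombination_apply, Finsupp.sum]
      push_cast
      refine Finset.sum_congr rfl fun p _ => ?_
      congr 1
      exact congrArg Subtype.val (Module.Basis.span_apply (linind hM) p)
    have hnx : ‖x‖ = ∑ p ∈ (b.repr x).support, ‖(b.repr x) p‖ := by
      show ‖(x : M)‖ = _
      rw [hrep]
      exact hM.2.1 _ _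
    have hfx : f₀ x = ∑ p ∈ (b.repr x).support, (b.repr x) p * g p := by
      rw [show f₀ x = (b.repr x).sum fun p c => c • g p from Module.Basis.constr_apply b ℂ g x]
      rw [Finsupp.sum]
      simp [smul_eq_mul]
    rw [hfx, one_mul, hnx]
    calc ‖∑ p ∈ (b.repr x).support, (b.repr x) p * g p‖
        ≤ ∑ p ∈ (b.repr x).support, ‖(b.repr x) p * g p‖ := norm_sum_le _ _
      _ ≤ ∑ p ∈ (b.repr x).support, ‖(b.repr x) p‖ := by
          refine Finset.sum_le_sum fun p _ => ?_
          rw [norm_mul]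
          calc ‖(b.repr x) p‖ * ‖g p‖ ≤ ‖(b.repr x) p‖ * 1 :=
                mul_le_mul_of_nonneg_left (hg p) (norm_nonneg _)
            _ = ‖(b.repr x) p‖ := by rw [mul_one]
  let f₁ : S →L[ℂ] ℂ := LinearMap.mkContinuous f₀ 1 hb
  have hdense : Dense (S : Set M) := fun a => dense_span hM a
  have hdr : DenseRange (S.subtypeL : S →L[ℂ] M) := by
    have : Set.range (S.subtypeL : S →L[ℂ] M) = (S : Set M) := Subtype.range_coe
    rw [DenseRange, this]
    exact hdense
  have hbd : ∀ x : S, ‖x‖ ≤ (1 : NNReal) * ‖(S.subtypeL : S →L[ℂ] M) x‖ := by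
    intro x; simp
  have hui : IsUniformInducing (S.subtypeL : S →L[ℂ] M) :=
    (ContinuousLinearMap.isUniformEmbedding_of_bound _ hbd).isUniformInducing
  let f : StrongDual ℂ M := f₁.extend S.subtypeL
  refine ⟨f, ?_, ?_⟩
  · have h1 := f₁.opNorm_extend_le (e := S.subtypeL) hdr (N := 1) hbd
    have h2 : ‖f₁‖ ≤ 1 := LinearMap.mkContinuous_norm_le f₀ zero_le_one hb
    calc ‖f‖ ≤ (1 : NNReal) * ‖f₁‖ := h1
      _ ≤ 1 := by simpa using h2
  · intro i j
    have hmem : e i j ∈ S := Submodule.subset_span ⟨(i, j), rfl⟩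
    have hx : (S.subtypeL : S →L[ℂ] M) ⟨e i j, hmem⟩ = e i j := rfl
    have h1 : f (e i j) = f₁ ⟨e i j, hmem⟩ :=
      ContinuousLinearMap.extend_eq f₁ (e := S.subtypeL) hdr hui ⟨e i j, hmem⟩
    rw [h1]
    have h2 : (⟨e i j, hmem⟩ : S) = b (i, j) := by
      refine Subtype.ext ?_
      exact congrArg Subtype.val (Module.Basis.span_apply (linind hM) (i, j)).symm
    show f₀ _ = _
    rw [h2]
    exact b.constr_basis ℂ g (i, j)

end MXA
end MatrixAux

section MatrixAux2

set_option linter.unusedSectionVars false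
set_option maxHeartbeats 1000000

variable {I : Type} [DecidableEq I] {M : Type}
  [NonUnitalNormedRing M] [NormedSpace ℂ M] [IsScalarTower ℂ M M]
  [SMulCommClass ℂ M M] [CompleteSpace M] {e : I → I → M}

namespace MXA

variable (hM : IsMatrixUnitsL1 I M e)
include hM

lemma sum_mul_unit (s : Finset (I × I)) (c : I × I → ℂ) (i k : I) :
    (∑ p ∈ s, c p • e p.1 p.2) * e i k =
      ∑ p ∈ s, (if p.2 = i then c p • e p.1 k else 0) := by
  rw [Finset.sum_mul]
  refine Finset.sum_congr rfl fun p _ => ?_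
  rw [smul_mul_assoc, hM.1]
  split <;> simp

lemma unit_mul_sum (s : Finset (I × I)) (c : I × I → ℂ) (i k : I) :
    e k i * (∑ p ∈ s, c p • e p.1 p.2) =
      ∑ p ∈ s, (if i = p.1 then c p • e k p.2 else 0) := by
  rw [Finset.mul_sum]
  refine Finset.sum_congr rfl fun p _ => ?_
  rw [mul_smul_comm, hM.1]
  split <;> simp

lemma diag_mul_sum (G : Finset I) (s : Finset (I × I)) (c : I × I → ℂ) :
    ∑ i ∈ G, e i i * (∑ p ∈ s, c p • e p.1 p.2) =
      ∑ p ∈ s, (if p.1 ∈ G then c p • e p.1 p.2 else 0) := by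
  have h1 : ∀ i, e i i * (∑ p ∈ s, c p • e p.1 p.2) =
      ∑ p ∈ s, (if i = p.1 then c p • e p.1 p.2 else 0) := by
    intro i
    rw [unit_mul_sum hM]
    refine Finset.sum_congr rfl fun p _ => ?_
    split_ifs with h
    · rw [h]
    · rfl
  calc ∑ i ∈ G, e i i * (∑ p ∈ s, c p • e p.1 p.2)
      = ∑ i ∈ G, ∑ p ∈ s, (if i = p.1 then c p • e p.1 p.2 else 0) :=
        Finset.sum_congr rfl fun i _ => h1 i
    _ = ∑ p ∈ s, ∑ i ∈ G, (if i = p.1 then c p • e p.1 p.2 else 0) := Finset.sum_comm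
    _ = ∑ p ∈ s, (if p.1 ∈ G then c p • e p.1 p.2 else 0) := by
        refine Finset.sum_congr rfl fun p _ => ?_
        exact Finset.sum_ite_eq' G p.1 (fun _ => c p • e p.1 p.2)

lemma norm_ite_smul_e (P : Prop) [Decidable P] (z : ℂ) (i j : I) :
    ‖if P then z • e i j else (0 : M)‖ = if P then ‖z‖ else 0 := by
  split
  · rw [norm_smul, norm_e hM, mul_one]
  · exact norm_zero

lemma col_sum_le (G : Finset I) (k : I) (b : M) : ∑ i ∈ G, ‖b * e i k‖ ≤ ‖b‖ := by
  have hclosed : IsClosed {b : M | ∑ i ∈ G, ‖b * e i k‖ ≤ ‖b‖} := by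
    refine isClosed_le ?_ continuous_norm
    exact continuous_finset_sum _ fun i _ => (continuous_id.mul continuous_const).norm
  have hspan : ((Submodule.span ℂ (Set.range fun p : I × I => e p.1 p.2)) : Set M) ⊆
      {b : M | ∑ i ∈ G, ‖b * e i k‖ ≤ ‖b‖} := by
    intro x hx
    obtain ⟨c, rfl⟩ := Finsupp.mem_span_range_iff_exists_finsupp.mp hx
    rw [Finsupp.sum]
    show ∑ i ∈ G, ‖(∑ p ∈ c.support, c p • e p.1 p.2) * e i k‖ ≤ _
    rw [hM.2.1 c.support c]
    calc ∑ i ∈ G, ‖(∑ p ∈ c.support, c p • e p.1 p.2) * e i k‖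
        = ∑ i ∈ G, ‖∑ p ∈ c.support, (if p.2 = i then c p • e p.1 k else 0)‖ := by
          refine Finset.sum_congr rfl fun i _ => ?_
          rw [sum_mul_unit hM]
      _ ≤ ∑ i ∈ G, ∑ p ∈ c.support, ‖(if p.2 = i then c p • e p.1 k else (0:M))‖ :=
          Finset.sum_le_sum fun i _ => norm_sum_le _ _
      _ = ∑ p ∈ c.support, ∑ i ∈ G, ‖(if p.2 = i then c p • e p.1 k else (0:M))‖ :=
          Finset.sum_comm
      _ = ∑ p ∈ c.support, ∑ i ∈ G, (if p.2 = i then ‖c p‖ else 0) := by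
          refine Finset.sum_congr rfl fun p _ => Finset.sum_congr rfl fun i _ => ?_
          exact norm_ite_smul_e hM _ _ _ _
      _ = ∑ p ∈ c.support, (if p.2 ∈ G then ‖c p‖ else 0) := by
          refine Finset.sum_congr rfl fun p _ => ?_
          exact Finset.sum_ite_eq G p.2 (fun _ => ‖c p‖)
      _ ≤ ∑ p ∈ c.support, ‖c p‖ := by
          refine Finset.sum_le_sum fun p _ => ?_
          split
          · exact le_rfl
          · exact norm_nonneg _
  exact closure_minimal hspan hclosed (dense_span hM b)

lemma row_sum_le (G : Finset I) (k : I) (b : M) : ∑ i ∈ G, ‖e k i * b‖ ≤ ‖b‖ := by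
  have hclosed : IsClosed {b : M | ∑ i ∈ G, ‖e k i * b‖ ≤ ‖b‖} := by
    refine isClosed_le ?_ continuous_norm
    exact continuous_finset_sum _ fun i _ => (continuous_const.mul continuous_id).norm
  have hspan : ((Submodule.span ℂ (Set.range fun p : I × I => e p.1 p.2)) : Set M) ⊆
      {b : M | ∑ i ∈ G, ‖e k i * b‖ ≤ ‖b‖} := by
    intro x hx
    obtain ⟨c, rfl⟩ := Finsupp.mem_span_range_iff_exists_finsupp.mp hx
    rw [Finsupp.sum]
    show ∑ i ∈ G, ‖e k i * (∑ p ∈ c.support, c p • e p.1 p.2)‖ ≤ _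
    rw [hM.2.1 c.support c]
    calc ∑ i ∈ G, ‖e k i * (∑ p ∈ c.support, c p • e p.1 p.2)‖
        = ∑ i ∈ G, ‖∑ p ∈ c.support, (if i = p.1 then c p • e k p.2 else 0)‖ := by
          refine Finset.sum_congr rfl fun i _ => ?_
          rw [unit_mul_sum hM]
      _ ≤ ∑ i ∈ G, ∑ p ∈ c.support, ‖(if i = p.1 then c p • e k p.2 else (0:M))‖ :=
          Finset.sum_le_sum fun i _ => norm_sum_le _ _
      _ = ∑ p ∈ c.support, ∑ i ∈ G, ‖(if i = p.1 then c p • e k p.2 else (0:M))‖ :=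
          Finset.sum_comm
      _ = ∑ p ∈ c.support, ∑ i ∈ G, (if i = p.1 then ‖c p‖ else 0) := by
          refine Finset.sum_congr rfl fun p _ => Finset.sum_congr rfl fun i _ => ?_
          exact norm_ite_smul_e hM _ _ _ _
      _ = ∑ p ∈ c.support, (if p.1 ∈ G then ‖c p‖ else 0) := by
          refine Finset.sum_congr rfl fun p _ => ?_
          exact Finset.sum_ite_eq' G p.1 (fun _ => ‖c p‖)
      _ ≤ ∑ p ∈ c.support, ‖c p‖ := by
          refine Finset.sum_le_sum fun p _ => ?_
          split
          · exact le_rfl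
          · exact norm_nonneg _
  exact closure_minimal hspan hclosed (dense_span hM b)

lemma diag_mul_le (G : Finset I) (b : M) : ‖∑ i ∈ G, e i i * b‖ ≤ ‖b‖ := by
  have hclosed : IsClosed {b : M | ‖∑ i ∈ G, e i i * b‖ ≤ ‖b‖} := by
    refine isClosed_le ?_ continuous_norm
    exact (continuous_finset_sum _ fun i _ => continuous_const.mul continuous_id).norm
  have hspan : ((Submodule.span ℂ (Set.range fun p : I × I => e p.1 p.2)) : Set M) ⊆
      {b : M | ‖∑ i ∈ G, e i i * b‖ ≤ ‖b‖} := by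
    intro x hx
    obtain ⟨c, rfl⟩ := Finsupp.mem_span_range_iff_exists_finsupp.mp hx
    rw [Finsupp.sum]
    show ‖∑ i ∈ G, e i i * (∑ p ∈ c.support, c p • e p.1 p.2)‖ ≤ _
    rw [hM.2.1 c.support c, diag_mul_sum hM]
    calc ‖∑ p ∈ c.support, (if p.1 ∈ G then c p • e p.1 p.2 else (0:M))‖
        ≤ ∑ p ∈ c.support, ‖(if p.1 ∈ G then c p • e p.1 p.2 else (0:M))‖ := norm_sum_le _ _
      _ = ∑ p ∈ c.support, (if p.1 ∈ G then ‖c p‖ else 0) := by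
          refine Finset.sum_congr rfl fun p _ => ?_
          exact norm_ite_smul_e hM _ _ _ _
      _ ≤ ∑ p ∈ c.support, ‖c p‖ := by
          refine Finset.sum_le_sum fun p _ => ?_
          split
          · exact le_rfl
          · exact norm_nonneg _
  exact closure_minimal hspan hclosed (dense_span hM b)

end MXA
end MatrixAux2

section MatrixAux3

set_option linter.unusedSectionVars false
set_option maxHeartbeats 1000000

variable {I : Type} [DecidableEq I] {M : Type}
  [NonUnitalNormedRing M] [NormedSpace ℂ M] [IsScalarTower ℂ M M]
  [SMulCommClass ℂ M M] [CompleteSpace M] {e : I → I → M}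

namespace MXA

variable (hM : IsMatrixUnitsL1 I M e)
include hM

lemma tsmulL_expand (G : Finset I) (i₀ : I) (s : Finset (I × I)) (c : I × I → ℂ) :
    tsmulL (∑ p ∈ s, c p • e p.1 p.2) (∑ i ∈ G, elemT (e i i₀) (e i₀ i)) =
      ∑ p ∈ s, (if p.2 ∈ G then c p • elemT (e p.1 i₀) (e i₀ p.2) else 0) := by
  rw [tsmulL_sum]
  have h1 : ∀ i, tsmulL (∑ p ∈ s, c p • e p.1 p.2) (elemT (e i i₀) (e i₀ i)) =
      ∑ p ∈ s, (if p.2 = i then c p • elemT (e p.1 i₀) (e i₀ i) else 0) := by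
    intro i
    rw [tsmulL_elemT, sum_mul_unit hM, elemT_sum_left]
    refine Finset.sum_congr rfl fun p _ => ?_
    split_ifs
    · exact elemT_smul_left _ _ _
    · exact elemT_zero_left _
  calc ∑ i ∈ G, tsmulL (∑ p ∈ s, c p • e p.1 p.2) (elemT (e i i₀) (e i₀ i))
      = ∑ i ∈ G, ∑ p ∈ s, (if p.2 = i then c p • elemT (e p.1 i₀) (e i₀ i) else 0) :=
        Finset.sum_congr rfl fun i _ => h1 i
    _ = ∑ p ∈ s, ∑ i ∈ G, (if p.2 = i then c p • elemT (e p.1 i₀) (e i₀ i) else 0) :=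
        Finset.sum_comm
    _ = ∑ p ∈ s, (if p.2 ∈ G then c p • elemT (e p.1 i₀) (e i₀ p.2) else 0) := by
        refine Finset.sum_congr rfl fun p _ => ?_
        exact Finset.sum_ite_eq G p.2 (fun i => c p • elemT (e p.1 i₀) (e i₀ i))

lemma tsmulR_expand (G : Finset I) (i₀ : I) (s : Finset (I × I)) (c : I × I → ℂ) :
    tsmulR (∑ p ∈ s, c p • e p.1 p.2) (∑ i ∈ G, elemT (e i i₀) (e i₀ i)) =
      ∑ p ∈ s, (if p.1 ∈ G then c p • elemT (e p.1 i₀) (e i₀ p.2) else 0) := by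
  rw [tsmulR_sum]
  have h1 : ∀ i, tsmulR (∑ p ∈ s, c p • e p.1 p.2) (elemT (e i i₀) (e i₀ i)) =
      ∑ p ∈ s, (if i = p.1 then c p • elemT (e p.1 i₀) (e i₀ p.2) else 0) := by
    intro i
    rw [tsmulR_elemT, unit_mul_sum hM, elemT_sum_right]
    refine Finset.sum_congr rfl fun p _ => ?_
    split_ifs with h
    · rw [elemT_smul_right, h]
    · exact elemT_zero_right _
  calc ∑ i ∈ G, tsmulR (∑ p ∈ s, c p • e p.1 p.2) (elemT (e i i₀) (e i₀ i))
      = ∑ i ∈ G, ∑ p ∈ s, (if i = p.1 then c p • elemT (e p.1 i₀) (e i₀ p.2) else 0) :=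
        Finset.sum_congr rfl fun i _ => h1 i
    _ = ∑ p ∈ s, ∑ i ∈ G, (if i = p.1 then c p • elemT (e p.1 i₀) (e i₀ p.2) else 0) :=
        Finset.sum_comm
    _ = ∑ p ∈ s, (if p.1 ∈ G then c p • elemT (e p.1 i₀) (e i₀ p.2) else 0) := by
        refine Finset.sum_congr rfl fun p _ => ?_
        exact Finset.sum_ite_eq' G p.1 (fun _ => c p • elemT (e p.1 i₀) (e i₀ p.2))

end MXA
end MatrixAux3

section MainParts

set_option linter.unusedSectionVars false
set_option maxHeartbeats 1000000

variable {I : Type} [Infinite I] [DecidableEq I] {M : Type}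
  [NonUnitalNormedRing M] [NormedSpace ℂ M] [IsScalarTower ℂ M M]
  [SMulCommClass ℂ M M] [CompleteSpace M] {e : I → I → M}

namespace MXA

variable (hM : IsMatrixUnitsL1 I M e)
include hM

lemma pseudoAmen : PseudoAmenable M := by
  classical
  obtain ⟨i₀⟩ : Nonempty I := inferInstance
  refine ⟨⟨Finset I, (· ⊆ ·), fun s => Finset.Subset.refl s,
      fun h1 h2 => Finset.Subset.trans h1 h2, ⟨∅⟩,
      fun s t => ⟨s ∪ t, Finset.subset_union_left, Finset.subset_union_right⟩⟩,
    fun G => ∑ i ∈ G, elemT (e i i₀) (e i₀ i), ?_, ?_, ?_⟩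
  · intro G
    refine Submodule.sum_mem _ fun i _ => ?_
    exact Submodule.le_topologicalClosure _ (Submodule.subset_span ⟨e i i₀, e i₀ i, rfl⟩)
  · -- approximate centrality
    intro a ε hε
    obtain ⟨c, hc⟩ := exists_approx hM a (show (0:ℝ) < ε/4 by linarith)
    set a' : M := ∑ p ∈ c.support, c p • e p.1 p.2 with ha'
    refine ⟨c.support.image Prod.fst ∪ c.support.image Prod.snd, fun G hG => ?_⟩
    set mG : TensorBidual M := ∑ i ∈ G, elemT (e i i₀) (e i₀ i) with hmG
    have hcoord : ∀ p ∈ c.support, p.1 ∈ G ∧ p.2 ∈ G := fun p hp =>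
      ⟨hG (Finset.mem_union_left _ (Finset.mem_image_of_mem _ hp)),
       hG (Finset.mem_union_right _ (Finset.mem_image_of_mem _ hp))⟩
    have hexact : tsmulL a' mG = tsmulR a' mG := by
      rw [hmG, ha', tsmulL_expand hM, tsmulR_expand hM]
      refine Finset.sum_congr rfl fun p hp => ?_
      rw [if_pos (hcoord p hp).2, if_pos (hcoord p hp).1]
    have hsplit : tsmulL a mG - tsmulR a mG =
        tsmulL (a - a') mG - tsmulR (a - a') mG := by
      have h1 : (a - a') + a' = a := sub_add_cancel a a'
      calc tsmulL a mG - tsmulR a mG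
          = tsmulL ((a - a') + a') mG - tsmulR ((a - a') + a') mG := by rw [h1]
        _ = (tsmulL (a - a') mG + tsmulL a' mG) - (tsmulR (a - a') mG + tsmulR a' mG) := by
            rw [tsmulL_add_left, tsmulR_add_left]
        _ = (tsmulL (a - a') mG - tsmulR (a - a') mG) + (tsmulL a' mG - tsmulR a' mG) := by
            abel
        _ = tsmulL (a - a') mG - tsmulR (a - a') mG := by rw [hexact, sub_self, add_zero]
    have hbnd : ‖tsmulL (a - a') mG - tsmulR (a - a') mG‖ ≤ 2 * ‖a - a'‖ := by
      have h2 : tsmulL (a - a') mG - tsmulR (a - a') mG =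
          ∑ i ∈ G, (elemT ((a - a') * e i i₀) (e i₀ i) - elemT (e i i₀) (e i₀ i * (a - a'))) := by
        rw [hmG, tsmulL_sum, tsmulR_sum, ← Finset.sum_sub_distrib]
        refine Finset.sum_congr rfl fun i _ => ?_
        rw [tsmulL_elemT, tsmulR_elemT]
      rw [h2]
      calc ‖∑ i ∈ G, (elemT ((a - a') * e i i₀) (e i₀ i) - elemT (e i i₀) (e i₀ i * (a - a')))‖
          ≤ ∑ i ∈ G, ‖elemT ((a - a') * e i i₀) (e i₀ i) - elemT (e i i₀) (e i₀ i * (a - a'))‖ :=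
            norm_sum_le _ _
        _ ≤ ∑ i ∈ G, (‖(a - a') * e i i₀‖ + ‖e i₀ i * (a - a')‖) := by
            refine Finset.sum_le_sum fun i _ => ?_
            refine le_trans (norm_sub_le _ _) (add_le_add ?_ ?_)
            · have := norm_elemT_le ((a - a') * e i i₀) (e i₀ i)
              rwa [norm_e hM, mul_one] at this
            · have := norm_elemT_le (e i i₀) (e i₀ i * (a - a'))
              rwa [norm_e hM, one_mul] at this
        _ = (∑ i ∈ G, ‖(a - a') * e i i₀‖) + ∑ i ∈ G, ‖e i₀ i * (a - a')‖ :=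
            Finset.sum_add_distrib
        _ ≤ ‖a - a'‖ + ‖a - a'‖ := add_le_add (col_sum_le hM G i₀ _) (row_sum_le hM G i₀ _)
        _ = 2 * ‖a - a'‖ := by ring
    show dist (tsmulL a mG - tsmulR a mG) (0 : TensorBidual M) < ε
    rw [dist_zero_right, hsplit]
    calc ‖tsmulL (a - a') mG - tsmulR (a - a') mG‖ ≤ 2 * ‖a - a'‖ := hbnd
      _ < ε := by linarith
  · -- approximate identity
    intro a ε hε
    obtain ⟨c, hc⟩ := exists_approx hM a (show (0:ℝ) < ε/3 by linarith)
    set a' : M := ∑ p ∈ c.support, c p • e p.1 p.2 with ha'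
    refine ⟨c.support.image Prod.fst, fun G hG => ?_⟩
    have hpi : piSS (∑ i ∈ G, elemT (e i i₀) (e i₀ i)) = ∑ i ∈ G, inclB (e i i) := by
      rw [piSS_sum]
      refine Finset.sum_congr rfl fun i _ => ?_
      rw [piSS_elemT, hM.1 i i₀ i₀ i, if_pos rfl]
    have hbs : bsmulR a (piSS (∑ i ∈ G, elemT (e i i₀) (e i₀ i))) =
        inclB (∑ i ∈ G, e i i * a) := by
      rw [hpi, bsmulR_sum, inclB_sum]
      refine Finset.sum_congr rfl fun i _ => ?_
      rw [bsmulR_inclB]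
    show dist (bsmulR a (piSS (∑ i ∈ G, elemT (e i i₀) (e i₀ i)))) (inclB a) < ε
    rw [hbs, show dist (inclB (∑ i ∈ G, e i i * a)) (inclB a) =
        ‖inclB (∑ i ∈ G, e i i * a) - inclB a‖ from @dist_eq_norm (Bidual M) ContinuousLinearMap.toSeminormedAddCommGroup _ _, ← inclB_sub]
    have hdiag : ∑ i ∈ G, e i i * a' = a' := by
      rw [ha', diag_mul_sum hM]
      refine Finset.sum_congr rfl fun p hp => ?_
      rw [if_pos (hG (Finset.mem_image_of_mem _ hp))]
    have hkey : (∑ i ∈ G, e i i * a) - a =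
        ((∑ i ∈ G, e i i * (a - a')) - (a - a')) := by
      have h3 : ∑ i ∈ G, e i i * (a - a') = (∑ i ∈ G, e i i * a) - ∑ i ∈ G, e i i * a' := by
        rw [← Finset.sum_sub_distrib]
        refine Finset.sum_congr rfl fun i _ => ?_
        rw [mul_sub]
      rw [h3, hdiag]
      abel
    refine lt_of_le_of_lt (norm_inclB_le _) ?_
    calc ‖(∑ i ∈ G, e i i * a) - a‖
        = ‖(∑ i ∈ G, e i i * (a - a')) - (a - a')‖ := by rw [hkey]
      _ ≤ ‖∑ i ∈ G, e i i * (a - a')‖ + ‖a - a'‖ := norm_sub_le _ _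
      _ ≤ ‖a - a'‖ + ‖a - a'‖ := add_le_add (diag_mul_le hM G _) le_rfl
      _ < ε := by linarith

end MXA
end MainParts

section NotStrong

set_option linter.unusedSectionVars false
set_option maxHeartbeats 1000000

variable {I : Type} [Infinite I] [DecidableEq I] {M : Type}
  [NonUnitalNormedRing M] [NormedSpace ℂ M] [IsScalarTower ℂ M M]
  [SMulCommClass ℂ M M] [CompleteSpace M] {e : I → I → M}

namespace MXA

variable (hM : IsMatrixUnitsL1 I M e)
include hM

lemma notStrong : ¬ StrongPseudoAmenable M := by
  classical
  rintro ⟨D, m, -, h2, h3⟩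
  obtain ⟨k₀⟩ : Nonempty I := inferInstance
  have hFex : ∀ q : I × I, ∃ f : StrongDual ℂ M, ‖f‖ ≤ 1 ∧
      ∀ i j, f (e i j) = if (i, j) = q then 1 else 0 := by
    intro q
    obtain ⟨f, hf1, hf2⟩ := exists_dual hM (fun p => if p = q then 1 else 0)
      (by intro p; by_cases h : p = q <;> simp [h])
    exact ⟨f, hf1, fun i j => hf2 i j⟩
  choose F hF1 hF2 using hFex
  have hR : ∀ i j k l : I, dualROp M (e k l) (F (i, j)) = if i = k then F (l, j) else 0 := by
    intro i j k l
    refine ext_dense hM fun p q => ?_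
    have h1 : dualROp M (e k l) (F (i, j)) (e p q) = F (i, j) (e k l * e p q) := rfl
    have h2' : (if i = k then F (l, j) else 0) (e p q) =
        if i = k then F (l, j) (e p q) else 0 := by split <;> rfl
    rw [h1, h2', hM.1 k l p q]
    by_cases hlp : l = p <;> by_cases hik : i = k <;>
      simp_all [hF2, Prod.ext_iff] <;> aesop
  have hL : ∀ i j k l : I, dualLOp M (e k l) (F (i, j)) = if j = l then F (i, k) else 0 := by
    intro i j k l
    refine ext_dense hM fun p q => ?_
    have h1 : dualLOp M (e k l) (F (i, j)) (e p q) = F (i, j) (e p q * e k l) := rfl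
    have h2' : (if j = l then F (i, k) else 0) (e p q) =
        if j = l then F (i, k) (e p q) else 0 := by split <;> rfl
    rw [h1, h2', hM.1 p q k l]
    by_cases hqk : q = k <;> by_cases hjl : j = l <;>
      simp_all [hF2, Prod.ext_iff] <;> aesop
  have key : ∀ (α : D.ι) (i j k l : I),
      (if i = k then piSS (m α) (F (l, j)) else 0) =
        (if j = l then piSS (m α) (F (i, k)) else 0) := by
    intro α i j k l
    have h := congrArg (fun Ψ : Bidual M => Ψ (F (i, j))) (h2 (e k l) α)
    have e1 : piSS (m α) (dualROp M (e k l) (F (i, j))) =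
        if i = k then piSS (m α) (F (l, j)) else 0 := by
      rw [hR i j k l]; split <;> simp
    have e2 : piSS (m α) (dualLOp M (e k l) (F (i, j))) =
        if j = l then piSS (m α) (F (i, k)) else 0 := by
      rw [hL i j k l]; split <;> simp
    rw [← e1, ← e2]
    exact h
  have hdiag : ∀ (α : D.ι) (u : I), piSS (m α) (F (u, u)) = piSS (m α) (F (k₀, k₀)) := by
    intro α u
    have h := key α k₀ u k₀ u
    simpa using h
  have hc0 : ∀ α : D.ι, piSS (m α) (F (k₀, k₀)) = 0 := by
    intro α
    by_contra hne
    set Φ : Bidual M := piSS (m α) with hΦ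
    have habs : 0 < ‖Φ (F (k₀, k₀))‖ := by
      simpa [norm_pos_iff] using hne
    obtain ⟨n, hn⟩ := exists_nat_gt (‖Φ‖ / ‖Φ (F (k₀, k₀))‖)
    obtain ⟨S, hS⟩ := Infinite.exists_subset_card_eq I n
    obtain ⟨fS, hfS1, hfS2⟩ := exists_dual hM
      (fun p => if p.1 = p.2 ∧ p.1 ∈ S then 1 else 0)
      (by intro p; split <;> simp)
    have hsum : fS = ∑ i ∈ S, F (i, i) := by
      refine ext_dense hM fun p q => ?_
      rw [hfS2 p q, ContinuousLinearMap.sum_apply,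
        Finset.sum_congr rfl fun i (_ : i ∈ S) => hF2 (i, i) p q]
      by_cases h1 : p = q
      · subst h1
        have : ∀ i ∈ S, (if ((p : I), (p : I)) = (i, i) then (1:ℂ) else 0) =
            (if p = i then (1:ℂ) else 0) := by
          intro i _
          simp [Prod.ext_iff, and_self]
        rw [Finset.sum_congr rfl this, Finset.sum_ite_eq S p (fun _ => (1:ℂ))]
        simp
      · have : ∀ i ∈ S, (if ((p : I), (q : I)) = (i, i) then (1:ℂ) else 0) = 0 := by
          intro i _
          rw [if_neg]
          intro hc
          cases hc
          exact h1 rfl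
        rw [Finset.sum_congr rfl this, Finset.sum_const_zero]
        rw [if_neg (by tauto)]
    have hval : Φ fS = n * Φ (F (k₀, k₀)) := by
      rw [hsum, map_sum, Finset.sum_congr rfl fun i (_ : i ∈ S) => hdiag α i,
        Finset.sum_const, hS, nsmul_eq_mul]
    have hb : ‖Φ fS‖ ≤ ‖Φ‖ := by
      have h1 : ‖Φ fS‖ ≤ ‖Φ‖ * ‖fS‖ := Φ.le_opNorm fS
      have h2' : ‖Φ‖ * ‖fS‖ ≤ ‖Φ‖ * 1 :=
        mul_le_mul_of_nonneg_left hfS1 (ContinuousLinearMap.opNorm_nonneg _)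
      calc ‖Φ fS‖ = ‖Φ fS‖ := rfl
        _ ≤ ‖Φ‖ * 1 := le_trans h1 h2'
        _ = ‖Φ‖ := mul_one _
    rw [hval] at hb
    rw [norm_mul] at hb
    have hnn : ‖(n : ℂ)‖ = n := by
      simp [Complex.norm_natCast]
    rw [hnn] at hb
    have hlt : ‖Φ‖ < n * ‖Φ (F (k₀, k₀))‖ := by
      rw [div_lt_iff₀ habs] at hn
      exact hn
    linarith
  obtain ⟨α₀, hα₀⟩ := h3 (e k₀ k₀) (1/2) (by norm_num)
  have hdist : dist (bsmulR (e k₀ k₀) (piSS (m α₀))) (inclB (e k₀ k₀)) < 1/2 :=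
    hα₀ α₀ (D.refl α₀)
  set ψ : StrongDual ℂ (StrongDual ℂ M) :=
    bsmulR (e k₀ k₀) (piSS (m α₀)) - inclB (e k₀ k₀) with hψdef
  have hψ : ψ (F (k₀, k₀)) = -1 := by
    have h1 : ψ (F (k₀, k₀)) =
        piSS (m α₀) (dualLOp M (e k₀ k₀) (F (k₀, k₀))) - F (k₀, k₀) (e k₀ k₀) := rfl
    rw [h1, hL k₀ k₀ k₀ k₀, if_pos rfl, hc0 α₀, hF2 (k₀, k₀) k₀ k₀, if_pos rfl]
    ring
  have hge : (1 : ℝ) ≤ ‖ψ‖ := by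
    have h1 : ‖ψ (F (k₀, k₀))‖ ≤ ‖ψ‖ * ‖F (k₀, k₀)‖ := ψ.le_opNorm _
    rw [hψ] at h1
    have h2' : ‖ψ‖ * ‖F (k₀, k₀)‖ ≤ ‖ψ‖ * 1 :=
      mul_le_mul_of_nonneg_left (hF1 (k₀, k₀)) (ContinuousLinearMap.opNorm_nonneg _)
    have h3' : ‖(-1 : ℂ)‖ = 1 := by norm_num
    rw [h3'] at h1
    linarith
  rw [show dist (bsmulR (e k₀ k₀) (piSS (m α₀))) (inclB (e k₀ k₀)) =
      ‖bsmulR (e k₀ k₀) (piSS (m α₀)) - inclB (e k₀ k₀)‖ from @dist_eq_norm (Bidual M) ContinuousLinearMap.toSeminormedAddCommGroup _ _] at hdist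
  rw [← hψdef] at hdist
  linarith

end MXA
end NotStrong

/-- For an infinite set `I`, the matrix algebra `M_I(ℂ)` is
pseudo-amenable but not strong pseudo-amenable. -/
theorem pseudoAmenable_not_strongPseudoAmenable_matrixAlgebra
    (I : Type) [Infinite I] [DecidableEq I]
    (M : Type) [NonUnitalNormedRing M] [NormedSpace ℂ M] [IsScalarTower ℂ M M]
    [SMulCommClass ℂ M M] [CompleteSpace M]
    (e : I → I → M) (hM : IsMatrixUnitsL1 I M e) :
    PseudoAmenable M ∧ ¬ StrongPseudoAmenable M := by
  exact ⟨MXA.pseudoAmen hM, MXA.notStrong hM⟩
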